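/- Let v_I ∈ ℝ^{n×p_I}, v_J ∈ ℝ^{n×p_J} with v_II and v_JJ positive definite, and let θ̄*_I ∈ ℝ^{p_I}, θ̄*_J ∈ ℝ^{p_J}, θ*_I ∈ ℝ^{p_I}, and w ∈ ℝ^{p_I} with all entries of w strictly positive. Set μ := v_Iθ̄*_I + v_Jθ̄*_J, let m(ρ) be the first block of G(ρ)⁻¹·(v_I⊤μ; v_J⊤μ), and define the bias term B²(ρ) := w⊤((θ*_I − m(ρ))^∘2). Set a := v_II⁻¹v_IJθ̄*_J − (θ*_I − θ̄*_I) and b := v_II⁻¹v_IJv_JJ⁻¹v_JIθ̄*_I − θ̄*_I. Then ρ ↦ B²(ρ) is differentiable at ρ = 0 with derivative (d/dρ)B²(ρ)|_{ρ=0} = 2·w⊤(a ∘ b). In particular, if a ⪰ 0 and b ⪯ 0 (the event ℰ), then (d/dρ)B²(ρ)|_{ρ=0} ≤ 0. -/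

import Mathlib

open Matrix

namespace MetaFusionStmt11

/-- The block matrix `G(ρ) = [[(1+ρ)v_II, −ρ v_IJ], [−ρ v_JI, (1+ρ)v_JJ]]`. -/
def mlG {n pI pJ : ℕ} (vI : Matrix (Fin n) (Fin pI) ℝ)
    (vJ : Matrix (Fin n) (Fin pJ) ℝ) (ρ : ℝ) :
    Matrix (Fin pI ⊕ Fin pJ) (Fin pI ⊕ Fin pJ) ℝ :=
  Matrix.fromBlocks ((1 + ρ) • (vIᵀ * vI)) ((-ρ) • (vIᵀ * vJ))
    ((-ρ) • (vJᵀ * vI)) ((1 + ρ) • (vJᵀ * vJ))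

/-- The conditional mean `m(ρ)`: the first block of `G(ρ)⁻¹ (v_Iᵀ μ; v_Jᵀ μ)`, where
`μ = v_I θ̄*_I + v_J θ̄*_J`. -/
noncomputable def condMeanI {n pI pJ : ℕ} (vI : Matrix (Fin n) (Fin pI) ℝ)
    (vJ : Matrix (Fin n) (Fin pJ) ℝ) (θbI : Fin pI → ℝ) (θbJ : Fin pJ → ℝ)
    (ρ : ℝ) : Fin pI → ℝ :=
  fun i => ((mlG vI vJ ρ)⁻¹ *ᵥ
    Sum.elim (vIᵀ *ᵥ (vI *ᵥ θbI + vJ *ᵥ θbJ)) (vJᵀ *ᵥ (vI *ᵥ θbI + vJ *ᵥ θbJ))) (Sum.inl i)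

attribute [local instance] Matrix.linftyOpNormedRing Matrix.linftyOpNormedAlgebra

/-- With `v_II`, `v_JJ` positive definite, `w` entrywise positive,
`B²(ρ) = wᵀ ((θ*_I − m(ρ))^∘2)`, `a = v_II⁻¹ v_IJ θ̄*_J − (θ*_I − θ̄*_I)` and
`b = v_II⁻¹ v_IJ v_JJ⁻¹ v_JI θ̄*_I − θ̄*_I`: the map `ρ ↦ B²(ρ)` is differentiable at `0`
with derivative `2 wᵀ (a ∘ b)`; in particular if `a ⪰ 0` and `b ⪯ 0` (the event ℰ), this
derivative is `≤ 0`. -/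
theorem bias_deriv_at_zero
    (n pI pJ : ℕ) (vI : Matrix (Fin n) (Fin pI) ℝ) (vJ : Matrix (Fin n) (Fin pJ) ℝ)
    (hI : (vIᵀ * vI).PosDef) (hJ : (vJᵀ * vJ).PosDef)
    (θbI : Fin pI → ℝ) (θbJ : Fin pJ → ℝ) (θsI : Fin pI → ℝ)
    (w : Fin pI → ℝ) (hw : ∀ j, 0 < w j) :
    HasDerivAt (fun ρ => w ⬝ᵥ fun j => (θsI j - condMeanI vI vJ θbI θbJ ρ j) ^ 2)
      (2 * (w ⬝ᵥ fun j =>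
        ((vIᵀ * vI)⁻¹ *ᵥ ((vIᵀ * vJ) *ᵥ θbJ) - (θsI - θbI)) j *
        ((vIᵀ * vI)⁻¹ *ᵥ ((vIᵀ * vJ) *ᵥ ((vJᵀ * vJ)⁻¹ *ᵥ ((vJᵀ * vI) *ᵥ θbI))) - θbI) j)) 0 ∧
    ((∀ j, 0 ≤ ((vIᵀ * vI)⁻¹ *ᵥ ((vIᵀ * vJ) *ᵥ θbJ) - (θsI - θbI)) j) →
     (∀ j, ((vIᵀ * vI)⁻¹ *ᵥ ((vIᵀ * vJ) *ᵥ ((vJᵀ * vJ)⁻¹ *ᵥ ((vJᵀ * vI) *ᵥ θbI))) - θbI) j ≤ 0) →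
      2 * (w ⬝ᵥ fun j =>
        ((vIᵀ * vI)⁻¹ *ᵥ ((vIᵀ * vJ) *ᵥ θbJ) - (θsI - θbI)) j *
        ((vIᵀ * vI)⁻¹ *ᵥ ((vIᵀ * vJ) *ᵥ ((vJᵀ * vJ)⁻¹ *ᵥ ((vJᵀ * vI) *ᵥ θbI))) - θbI) j) ≤ 0) := by
  constructor
  · -- notation
    set vII := vIᵀ * vI with hvII
    set vJJ := vJᵀ * vJ with hvJJ
    set vIJ := vIᵀ * vJ with hvIJ
    set vJI := vJᵀ * vI with hvJI
    have hIdet : IsUnit vII.det := hI.det_pos.ne'.isUnit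
    have hJdet : IsUnit vJJ.det := hJ.det_pos.ne'.isUnit
    set G0 : Matrix (Fin pI ⊕ Fin pJ) (Fin pI ⊕ Fin pJ) ℝ :=
      Matrix.fromBlocks vII 0 0 vJJ with hG0
    set G1 : Matrix (Fin pI ⊕ Fin pJ) (Fin pI ⊕ Fin pJ) ℝ :=
      Matrix.fromBlocks vII (-vIJ) (-vJI) vJJ with hG1
    have hGsplit : ∀ ρ : ℝ, mlG vI vJ ρ = G0 + ρ • G1 := by
      intro ρ
      ext i j
      rcases i with i | i <;> rcases j with j | j <;>
        simp [mlG, hG0, hG1, hvII, hvJJ, hvIJ, hvJI, Matrix.add_apply, Matrix.smul_apply, smul_eq_mul] <;> ring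
    have hG0det : IsUnit G0.det := by
      rw [hG0, Matrix.det_fromBlocks_zero₂₁]
      exact hIdet.mul hJdet
    have hG0unit : IsUnit G0 := (Matrix.isUnit_iff_isUnit_det G0).mpr hG0det
    have hG0inv : G0⁻¹ = Matrix.fromBlocks vII⁻¹ 0 0 vJJ⁻¹ := by
      apply Matrix.inv_eq_left_inv
      rw [hG0, Matrix.fromBlocks_multiply]
      simp [Matrix.nonsing_inv_mul _ hIdet, Matrix.nonsing_inv_mul _ hJdet,
        Matrix.fromBlocks_one]
    -- the constant vector c
    set μ : Fin n → ℝ := vI *ᵥ θbI + vJ *ᵥ θbJ with hμ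
    set c : (Fin pI ⊕ Fin pJ) → ℝ := Sum.elim (vIᵀ *ᵥ μ) (vJᵀ *ᵥ μ) with hc
    -- derivative of the inverse matrix
    set D : Matrix (Fin pI ⊕ Fin pJ) (Fin pI ⊕ Fin pJ) ℝ := -(G0⁻¹ * G1 * G0⁻¹) with hD
    have hu : (hG0unit.unit : Matrix (Fin pI ⊕ Fin pJ) (Fin pI ⊕ Fin pJ) ℝ) = G0 :=
      hG0unit.unit_spec
    have huinv : ((hG0unit.unit⁻¹ : _ˣ) : Matrix (Fin pI ⊕ Fin pJ) (Fin pI ⊕ Fin pJ) ℝ)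
        = G0⁻¹ := by rw [Matrix.coe_units_inv, hu]
    have hGder : HasDerivAt (fun ρ : ℝ => G0 + ρ • G1) G1 0 := by
      have h := ((hasDerivAt_id' (0:ℝ)).smul_const G1).const_add G0
      rwa [one_smul] at h
    have hinvder : HasDerivAt (fun ρ : ℝ => (mlG vI vJ ρ)⁻¹) D 0 := by
      have h0 : G0 + (0:ℝ) • G1 = (hG0unit.unit : Matrix _ _ ℝ) := by simp [hu]
      have hfd := (hasFDerivAt_ringInverse (𝕜 := ℝ) hG0unit.unit)
      rw [← h0] at hfd
      have key := hfd.comp_hasDerivAt 0 hGder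
      have heq : (fun ρ : ℝ => (mlG vI vJ ρ)⁻¹)
          = fun ρ : ℝ => Ring.inverse (G0 + ρ • G1) := by
        funext ρ
        rw [hGsplit ρ, Matrix.nonsing_inv_eq_ringInverse]
      rw [heq]
      have hD' : D = (-(ContinuousLinearMap.mulLeftRight ℝ (Matrix (Fin pI ⊕ Fin pJ) (Fin pI ⊕ Fin pJ) ℝ) ↑hG0unit.unit⁻¹) ↑hG0unit.unit⁻¹) G1 := by
        simp [hD, huinv, ContinuousLinearMap.mulLeftRight_apply]
      rw [hD']
      exact key
    -- per-coordinate linear functional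
    have hmj : ∀ j : Fin pI,
        HasDerivAt (fun ρ : ℝ => condMeanI vI vJ θbI θbJ ρ j) ((D *ᵥ c) (Sum.inl j)) 0 := by
      intro j
      let L : Matrix (Fin pI ⊕ Fin pJ) (Fin pI ⊕ Fin pJ) ℝ →ₗ[ℝ] ℝ :=
        { toFun := fun B => (B *ᵥ c) (Sum.inl j)
          map_add' := fun A B => by simp [Matrix.add_mulVec]
          map_smul' := fun r B => by simp [Matrix.smul_mulVec] }
      have := (L.toContinuousLinearMap.hasFDerivAt (x := (mlG vI vJ 0)⁻¹)).comp_hasDerivAt 0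
        hinvder
      exact this
    -- values at 0
    have hinv0 : (mlG vI vJ 0)⁻¹ = G0⁻¹ := by rw [hGsplit 0]; simp
    have hcI : vIᵀ *ᵥ μ = vII *ᵥ θbI + vIJ *ᵥ θbJ := by
      rw [hμ, Matrix.mulVec_add, hvII, hvIJ, ← Matrix.mulVec_mulVec, ← Matrix.mulVec_mulVec]
    have hcJ : vJᵀ *ᵥ μ = vJI *ᵥ θbI + vJJ *ᵥ θbJ := by
      rw [hμ, Matrix.mulVec_add, hvJJ, hvJI, ← Matrix.mulVec_mulVec, ← Matrix.mulVec_mulVec]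
    have hIinv : ∀ x : Fin pI → ℝ, vII⁻¹ *ᵥ (vII *ᵥ x) = x := by
      intro x
      rw [Matrix.mulVec_mulVec, Matrix.nonsing_inv_mul _ hIdet, Matrix.one_mulVec]
    have hJinv : ∀ x : Fin pJ → ℝ, vJJ⁻¹ *ᵥ (vJJ *ᵥ x) = x := by
      intro x
      rw [Matrix.mulVec_mulVec, Matrix.nonsing_inv_mul _ hJdet, Matrix.one_mulVec]
    -- G0⁻¹ *ᵥ c
    set x0 : Fin pI → ℝ := θbI + vII⁻¹ *ᵥ (vIJ *ᵥ θbJ) with hx0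
    set y0 : Fin pJ → ℝ := θbJ + vJJ⁻¹ *ᵥ (vJI *ᵥ θbI) with hy0
    have hII1 : vII⁻¹ * vII = 1 := Matrix.nonsing_inv_mul _ hIdet
    have hJJ1 : vJJ⁻¹ * vJJ = 1 := Matrix.nonsing_inv_mul _ hJdet
    have hG0c : G0⁻¹ *ᵥ c = Sum.elim x0 y0 := by
      rw [hG0inv, hc, Matrix.fromBlocks_mulVec]
      simp only [Sum.elim_comp_inl, Sum.elim_comp_inr, hcI, hcJ]
      funext i
      rcases i with i | i <;>
        simp [hx0, hy0, Matrix.zero_mulVec, Matrix.mulVec_add, Matrix.mulVec_mulVec,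
          hII1, hJJ1, Matrix.one_mulVec, Pi.add_apply] <;> ring
    have hDc : D *ᵥ c = Sum.elim
        (vII⁻¹ *ᵥ (vIJ *ᵥ (vJJ⁻¹ *ᵥ (vJI *ᵥ θbI))) - θbI)
        (vJJ⁻¹ *ᵥ (vJI *ᵥ (vII⁻¹ *ᵥ (vIJ *ᵥ θbJ))) - θbJ) := by
      rw [hD, Matrix.neg_mulVec, ← Matrix.mulVec_mulVec, ← Matrix.mulVec_mulVec, hG0c,
        hG1, Matrix.fromBlocks_mulVec]
      simp only [Sum.elim_comp_inl, Sum.elim_comp_inr]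
      rw [hG0inv, Matrix.fromBlocks_mulVec]
      simp only [Sum.elim_comp_inl, Sum.elim_comp_inr]
      funext i
      rcases i with i | i <;>
        simp [hx0, hy0, Matrix.zero_mulVec, Matrix.mulVec_add, Matrix.mulVec_sub,
          Matrix.neg_mulVec, Matrix.mulVec_neg, Matrix.mulVec_mulVec, hII1, hJJ1,
          Matrix.one_mulVec, Matrix.mul_assoc, Pi.add_apply, Pi.sub_apply, Pi.neg_apply,
          Matrix.nonsing_inv_mul_cancel_left _ _ hIdet,
          Matrix.nonsing_inv_mul_cancel_left _ _ hJdet,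
          Matrix.mul_nonsing_inv_cancel_left _ _ hIdet,
          Matrix.mul_nonsing_inv_cancel_left _ _ hJdet] <;> ring
    -- assemble
    set a : Fin pI → ℝ := vII⁻¹ *ᵥ (vIJ *ᵥ θbJ) - (θsI - θbI) with ha
    set b : Fin pI → ℝ := vII⁻¹ *ᵥ (vIJ *ᵥ (vJJ⁻¹ *ᵥ (vJI *ᵥ θbI))) - θbI with hb
    have hm0 : ∀ j, condMeanI vI vJ θbI θbJ 0 j = x0 j := by
      intro j
      show ((mlG vI vJ 0)⁻¹ *ᵥ c) (Sum.inl j) = _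
      rw [hinv0, hG0c]
      rfl
    have key : HasDerivAt
        (fun ρ => w ⬝ᵥ fun j => (θsI j - condMeanI vI vJ θbI θbJ ρ j) ^ 2)
        (∑ j, w j * (2 * (θsI j - condMeanI vI vJ θbI θbJ 0 j) ^ 1 *
          (0 - (D *ᵥ c) (Sum.inl j)))) 0 := by
      have : ∀ j ∈ Finset.univ, HasDerivAt
          (fun ρ => w j * (θsI j - condMeanI vI vJ θbI θbJ ρ j) ^ 2)
          (w j * (2 * (θsI j - condMeanI vI vJ θbI θbJ 0 j) ^ 1 *
            (0 - (D *ᵥ c) (Sum.inl j)))) 0 := by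
        intro j _
        exact (((hasDerivAt_const (0:ℝ) (θsI j)).sub (hmj j)).pow 2).const_mul (w j)
      simpa [dotProduct, Finset.mul_sum] using HasDerivAt.fun_sum this
    have hval : (∑ j, w j * (2 * (θsI j - condMeanI vI vJ θbI θbJ 0 j) ^ 1 *
          (0 - (D *ᵥ c) (Sum.inl j))))
        = 2 * (w ⬝ᵥ fun j => a j * b j) := by
      rw [dotProduct, Finset.mul_sum]
      apply Finset.sum_congr rfl
      intro j _
      have h1 : θsI j - condMeanI vI vJ θbI θbJ 0 j = -(a j) := by
        rw [hm0 j, ha, hx0]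
        simp [Matrix.sub_apply, Pi.add_apply, Pi.sub_apply]
        ring
      have h2 : (D *ᵥ c) (Sum.inl j) = b j := by rw [hDc]; rfl
      rw [h1, h2]
      ring
    rw [← hval]
    exact key
  · intro ha hb
    have : (w ⬝ᵥ fun j =>
        ((vIᵀ * vI)⁻¹ *ᵥ ((vIᵀ * vJ) *ᵥ θbJ) - (θsI - θbI)) j *
        ((vIᵀ * vI)⁻¹ *ᵥ ((vIᵀ * vJ) *ᵥ ((vJᵀ * vJ)⁻¹ *ᵥ ((vJᵀ * vI) *ᵥ θbI))) - θbI) j) ≤ 0 := by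
      apply Finset.sum_nonpos
      intro j _
      exact mul_nonpos_of_nonneg_of_nonpos (hw j).le (mul_nonpos_of_nonneg_of_nonpos (ha j) (hb j))
    linarith


end MetaFusionStmt11
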